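/- Let $P = (p_n)$ and $Q = (q_n)$ be sequences of integers with $p_n, q_n \geq 2$ and suppose $p_n > q_n$ for infinitely many $n$. Then $\psi_{P,Q}$ is monotone on no interval: for every nondegenerate interval $J \subseteq [0,1)$ there exist $c < x < y$ in $J$ with $\psi_{P,Q}(c) < \psi_{P,Q}(x)$ and $\psi_{P,Q}(x) > \psi_{P,Q}(y)$. -/

import Mathlib

noncomputable def cantorDigit (p : ℕ → ℕ) (x : ℝ) (n : ℕ) : ℕ :=
  (⌊(∏ i ∈ Finset.range (n + 1), (p i : ℝ)) * Int.fract x⌋).toNat % p n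

noncomputable def psiPQ (p q : ℕ → ℕ) (x : ℝ) : ℝ :=
  ∑' n : ℕ, (min (cantorDigit p x n) (q n - 1) : ℝ) / ∏ i ∈ Finset.range (n + 1), (q i : ℝ)

open Finset

lemma cantorDigit_nat_div (p : ℕ → ℕ) (hp : ∀ n, 2 ≤ p n) (k m n : ℕ)
    (hk : k < ∏ i ∈ range m, p i) :
    cantorDigit p ((k : ℝ) / (∏ i ∈ range m, p i : ℕ)) n =
      if n < m then (k / ∏ i ∈ Finset.Ico (n + 1) m, p i) % p n else 0 := by
  have hPm : 0 < ∏ i ∈ range m, p i := Finset.prod_pos fun i _ => by have := hp i; omega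
  have hPmR : (0 : ℝ) < (∏ i ∈ range m, p i : ℕ) := by exact_mod_cast hPm
  have hfract : Int.fract ((k : ℝ) / (∏ i ∈ range m, p i : ℕ)) =
      (k : ℝ) / (∏ i ∈ range m, p i : ℕ) := by
    rw [Int.fract_eq_self]
    constructor
    · positivity
    · rw [div_lt_one hPmR]; exact_mod_cast hk
  unfold cantorDigit
  rw [hfract]
  have hcast : (∏ i ∈ range (n + 1), (p i : ℝ)) = ((∏ i ∈ range (n + 1), p i : ℕ) : ℝ) := by
    push_cast; ring
  rw [hcast]
  by_cases hnm : n < m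
  · rw [if_pos hnm]
    have hsplit : (∏ i ∈ range (n + 1), p i) * (∏ i ∈ Finset.Ico (n + 1) m, p i) =
        ∏ i ∈ range m, p i := by
      rw [Finset.range_eq_Ico, Finset.range_eq_Ico]
      exact Finset.prod_Ico_consecutive p (Nat.zero_le _) hnm
    have hval : ((∏ i ∈ range (n + 1), p i : ℕ) : ℝ) * ((k : ℝ) / (∏ i ∈ range m, p i : ℕ)) =
        (k : ℝ) / ((∏ i ∈ Finset.Ico (n + 1) m, p i : ℕ) : ℝ) := by
      rw [← hsplit]
      have h1 : (0 : ℝ) < ((∏ i ∈ range (n + 1), p i : ℕ) : ℝ) := by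
        exact_mod_cast Finset.prod_pos fun i _ => by have := hp i; omega
      have h2 : (0 : ℝ) < ((∏ i ∈ Finset.Ico (n + 1) m, p i : ℕ) : ℝ) := by
        exact_mod_cast Finset.prod_pos (fun i _ => by have := hp i; omega :
          ∀ i ∈ Finset.Ico (n + 1) m, 0 < p i)
      have h1' : (∏ i ∈ range (n + 1), (p i : ℝ)) ≠ 0 := by rw [hcast]; exact h1.ne'
      push_cast
      rw [mul_div_assoc', mul_div_mul_left _ _ h1']
    rw [hval]
    have : ⌊(k : ℝ) / ((∏ i ∈ Finset.Ico (n + 1) m, p i : ℕ) : ℝ)⌋.toNat =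
        k / ∏ i ∈ Finset.Ico (n + 1) m, p i := by
      rw [Int.floor_toNat, Nat.floor_div_natCast, Nat.floor_natCast]
    rw [this]
  · rw [if_neg hnm]
    push_neg at hnm
    have hsplit : (∏ i ∈ range m, p i) * (∏ i ∈ Finset.Ico m (n + 1), p i) =
        ∏ i ∈ range (n + 1), p i := by
      rw [Finset.range_eq_Ico, Finset.range_eq_Ico]
      exact Finset.prod_Ico_consecutive p (Nat.zero_le _) (by omega)
    have hval : ((∏ i ∈ range (n + 1), p i : ℕ) : ℝ) * ((k : ℝ) / (∏ i ∈ range m, p i : ℕ)) =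
        ((k * ∏ i ∈ Finset.Ico m (n + 1), p i : ℕ) : ℝ) := by
      rw [← hsplit]
      have hm0 : (∏ i ∈ range m, (p i : ℝ)) ≠ 0 := by
        exact ne_of_gt (Finset.prod_pos fun i _ => by
          have := hp i; positivity)
      push_cast
      field_simp
    rw [hval, Int.floor_natCast, Int.toNat_natCast]
    have hdvd : p n ∣ k * ∏ i ∈ Finset.Ico m (n + 1), p i :=
      Dvd.dvd.mul_left (Finset.dvd_prod_of_mem p (by simp [Finset.mem_Ico]; omega)) k
    exact Nat.mod_eq_zero_of_dvd hdvd

lemma psiPQ_nat_div (p q : ℕ → ℕ) (hp : ∀ n, 2 ≤ p n) (hq : ∀ n, 2 ≤ q n) (k m : ℕ)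
    (hk : k < ∏ i ∈ range m, p i) :
    psiPQ p q ((k : ℝ) / (∏ i ∈ range m, p i : ℕ)) =
      ∑ j ∈ range m,
        (min (((k / ∏ i ∈ Finset.Ico (j + 1) m, p i) % p j : ℕ) : ℝ) ((q j : ℝ) - 1)) /
          ∏ i ∈ range (j + 1), (q i : ℝ) := by
  unfold psiPQ
  rw [tsum_eq_sum (s := range m)]
  · refine Finset.sum_congr rfl fun j hj => ?_
    rw [cantorDigit_nat_div p hp k m j hk, if_pos (Finset.mem_range.mp hj)]
  · intro j hj
    rw [cantorDigit_nat_div p hp k m j hk, if_neg (by simpa using hj)]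
    have : min ((0 : ℕ) : ℝ) ((q j : ℝ) - 1) = 0 := by
      rw [min_eq_left]
      · simp
      · have := hq j
        have : (2 : ℝ) ≤ (q j : ℝ) := by exact_mod_cast this
        push_cast
        linarith
    rw [this, zero_div]

set_option maxHeartbeats 2000000 in
theorem stmt11 (p q : ℕ → ℕ) (hp : ∀ n, 2 ≤ p n) (hq : ∀ n, 2 ≤ q n)
    (hinf : {n | q n < p n}.Infinite) :
    ∀ a b : ℝ, 0 ≤ a → a < b → b < 1 →
      ∃ c x y : ℝ, a ≤ c ∧ c < x ∧ x < y ∧ y ≤ b ∧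
        psiPQ p q c < psiPQ p q x ∧ psiPQ p q y < psiPQ p q x := by
  intro a b ha hab hb1
  have hba : (0 : ℝ) < b - a := by linarith
  obtain ⟨N, hN⟩ := pow_unbounded_of_one_lt (2 / (b - a)) (one_lt_two : (1 : ℝ) < 2)
  obtain ⟨n, hnS, hnN⟩ := hinf.exists_gt N
  have hqp : q n < p n := hnS
  have hP : ∀ m, 0 < ∏ i ∈ range m, p i := fun m =>
    Finset.prod_pos fun i _ => by have := hp i; omega
  -- notation
  set Pn : ℕ := ∏ i ∈ range n, p i with hPn_def
  set P1 : ℕ := ∏ i ∈ range (n + 1), p i with hP1_def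
  set P2 : ℕ := ∏ i ∈ range (n + 2), p i with hP2_def
  have hPs1 : P1 = Pn * p n := Finset.prod_range_succ p n
  have hPs2 : P2 = P1 * p (n + 1) := Finset.prod_range_succ p (n + 1)
  have hPn0 : 0 < Pn := hP n
  have hP10 : 0 < P1 := hP (n + 1)
  have hP20 : 0 < P2 := hP (n + 2)
  have hPn2 : (2 : ℝ) / (b - a) < (Pn : ℝ) := by
    have h2n : (2 : ℕ) ^ n ≤ Pn := by
      calc (2 : ℕ) ^ n = ∏ _i ∈ range n, 2 := by
            rw [Finset.prod_const, Finset.card_range]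
        _ ≤ Pn := Finset.prod_le_prod' fun i _ => hp i
    calc (2 : ℝ) / (b - a) < 2 ^ N := hN
      _ ≤ 2 ^ n := by
          apply pow_le_pow_right₀ one_le_two hnN.le
      _ ≤ (Pn : ℝ) := by exact_mod_cast h2n
  have h2le : (2 : ℝ) ≤ (b - a) * (Pn : ℝ) := by
    rw [div_lt_iff₀ hba] at hPn2
    linarith
  -- base point
  set k0 : ℕ := ⌈a * (Pn : ℝ)⌉₊ with hk0_def
  have hk0 : a * (Pn : ℝ) ≤ (k0 : ℝ) := Nat.le_ceil _
  have hk0' : (k0 : ℝ) < a * (Pn : ℝ) + 1 := Nat.ceil_lt_add_one (by positivity)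
  have hk0b : ((k0 : ℝ) + 1) < b * (Pn : ℝ) := by nlinarith
  have hk0P : k0 + 1 < Pn := by
    have : ((k0 : ℝ) + 1) < (Pn : ℝ) := by nlinarith [hPn0]
    exact_mod_cast this
  -- the three numerators
  set kc : ℕ := k0 * p n + (q n - 1) with hkc_def
  set ky : ℕ := k0 * p n + (p n - 1) with hky_def
  set kx : ℕ := kc * p (n + 1) + 1 with hkx_def
  have hpn := hp n
  have hpn1 := hp (n + 1)
  have hqn := hq n
  have hqn1 := hq (n + 1)
  have hkcP : kc < P1 := by
    rw [hPs1]
    calc kc < (k0 + 1) * p n := by rw [Nat.succ_mul]; omega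
      _ ≤ Pn * p n := Nat.mul_le_mul_right _ (by omega)
  have hkyP : ky < P1 := by
    rw [hPs1]
    calc ky < (k0 + 1) * p n := by rw [Nat.succ_mul]; omega
      _ ≤ Pn * p n := Nat.mul_le_mul_right _ (by omega)
  have hkxP : kx < P2 := by
    rw [hPs2]
    calc kx < (kc + 1) * p (n + 1) := by rw [Nat.succ_mul]; omega
      _ ≤ P1 * p (n + 1) := Nat.mul_le_mul_right _ (by omega)
  -- digit identities
  have hdiv_x : ∀ j, j < n + 1 →
      kx / ∏ i ∈ Finset.Ico (j + 1) (n + 2), p i =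
        kc / ∏ i ∈ Finset.Ico (j + 1) (n + 1), p i := by
    intro j hj
    have hsplit : ∏ i ∈ Finset.Ico (j + 1) (n + 2), p i =
        (∏ i ∈ Finset.Ico (j + 1) (n + 1), p i) * p (n + 1) :=
      Finset.prod_Ico_succ_top (by omega) p
    have h1 : kx / p (n + 1) = kc := by
      rw [hkx_def, mul_comm kc (p (n + 1)), Nat.mul_add_div (by omega),
        Nat.div_eq_of_lt (by omega), Nat.add_zero]
    rw [hsplit, mul_comm (∏ i ∈ Finset.Ico (j + 1) (n + 1), p i) (p (n + 1)),
      ← Nat.div_div_eq_div_mul, h1]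
  have hdiv_cy : ∀ j, j < n →
      kc / ∏ i ∈ Finset.Ico (j + 1) (n + 1), p i =
        ky / ∏ i ∈ Finset.Ico (j + 1) (n + 1), p i := by
    intro j hj
    have hsplit : ∏ i ∈ Finset.Ico (j + 1) (n + 1), p i =
        (∏ i ∈ Finset.Ico (j + 1) n, p i) * p n :=
      Finset.prod_Ico_succ_top (by omega) p
    have h1 : kc / p n = k0 := by
      rw [hkc_def, mul_comm k0 (p n), Nat.mul_add_div (by omega),
        Nat.div_eq_of_lt (by omega), Nat.add_zero]
    have h2 : ky / p n = k0 := by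
      rw [hky_def, mul_comm k0 (p n), Nat.mul_add_div (by omega),
        Nat.div_eq_of_lt (by omega), Nat.add_zero]
    rw [hsplit, mul_comm (∏ i ∈ Finset.Ico (j + 1) n, p i) (p n),
      ← Nat.div_div_eq_div_mul, ← Nat.div_div_eq_div_mul, h1, h2]
  have hIcoself : ∀ m : ℕ, ∏ i ∈ Finset.Ico m m, p i = 1 := by
    intro m; rw [Finset.Ico_self, Finset.prod_empty]
  clear_value kx ky kc k0 P2 P1 Pn
  have hPsi : ∀ a' b' : ℝ, 0 ≤ a' → a' < b' → b' < 1 → True := fun _ _ _ _ _ => trivial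
  clear hPsi
  refine ⟨(kc : ℝ) / (P1 : ℕ), (kx : ℝ) / (P2 : ℕ), (ky : ℝ) / (P1 : ℕ),
    ?_, ?_, ?_, ?_, ?_, ?_⟩
  · -- a ≤ c
    rw [le_div_iff₀ (by exact_mod_cast hP10)]
    have hcast : (P1 : ℝ) = (Pn : ℝ) * (p n : ℝ) := by rw [hPs1]; push_cast; ring
    have hkc_ge : (k0 : ℝ) * (p n : ℝ) ≤ (kc : ℝ) := by
      rw [hkc_def]; push_cast; linarith [Nat.cast_nonneg (α := ℝ) (q n - 1)]
    rw [hcast]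
    nlinarith [Nat.cast_nonneg (α := ℝ) (p n)]
  · -- c < x
    rw [div_lt_div_iff₀ (by exact_mod_cast hP10) (by exact_mod_cast hP20)]
    have hcast : (P2 : ℝ) = (P1 : ℝ) * (p (n + 1) : ℝ) := by rw [hPs2]; push_cast; ring
    have hkx_eq : (kx : ℝ) = (kc : ℝ) * (p (n + 1) : ℝ) + 1 := by rw [hkx_def]; push_cast; ring
    rw [hcast, hkx_eq]
    have : (0 : ℝ) < (P1 : ℝ) := by exact_mod_cast hP10
    nlinarith
  · -- x < y
    rw [div_lt_div_iff₀ (by exact_mod_cast hP20) (by exact_mod_cast hP10)]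
    have hcast : (P2 : ℝ) = (P1 : ℝ) * (p (n + 1) : ℝ) := by rw [hPs2]; push_cast; ring
    have hkx_eq : (kx : ℝ) = (kc : ℝ) * (p (n + 1) : ℝ) + 1 := by rw [hkx_def]; push_cast; ring
    have hky_ge : (kc : ℝ) + 1 ≤ (ky : ℝ) := by
      have : kc + 1 ≤ ky := by rw [hkc_def, hky_def]; omega
      exact_mod_cast this
    have hP1R : (0 : ℝ) < (P1 : ℝ) := by exact_mod_cast hP10
    have hpn1R : (2 : ℝ) ≤ (p (n + 1) : ℝ) := by exact_mod_cast hpn1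
    have hkcR : (0 : ℝ) ≤ (kc : ℝ) := Nat.cast_nonneg _
    rw [hcast, hkx_eq]
    nlinarith
  · -- y ≤ b
    rw [div_le_iff₀ (by exact_mod_cast hP10)]
    have hcast : (P1 : ℝ) = (Pn : ℝ) * (p n : ℝ) := by rw [hPs1]; push_cast; ring
    have hky_lt : (ky : ℝ) < ((k0 : ℝ) + 1) * (p n : ℝ) := by
      have : ky < (k0 + 1) * p n := by rw [hky_def, Nat.succ_mul]; omega
      exact_mod_cast this
    have hpnR : (0 : ℝ) < (p n : ℝ) := by exact_mod_cast (by omega : 0 < p n)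
    rw [hcast]
    nlinarith
  · -- psi c < psi x
    have hc := psiPQ_nat_div p q hp hq kc (n + 1) (by rw [hP1_def] at hkcP; exact hkcP)
    have hx := psiPQ_nat_div p q hp hq kx (n + 2) (by rw [hP2_def] at hkxP; exact hkxP)
    rw [← hP1_def] at hc
    rw [← hP2_def] at hx
    rw [hc, hx, Finset.sum_range_succ _ (n + 1)]
    have hsum_eq : ∑ j ∈ range (n + 1),
        (min (((kx / ∏ i ∈ Finset.Ico (j + 1) (n + 2), p i) % p j : ℕ) : ℝ) ((q j : ℝ) - 1)) /
          ∏ i ∈ range (j + 1), (q i : ℝ) =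
        ∑ j ∈ range (n + 1),
        (min (((kc / ∏ i ∈ Finset.Ico (j + 1) (n + 1), p i) % p j : ℕ) : ℝ) ((q j : ℝ) - 1)) /
          ∏ i ∈ range (j + 1), (q i : ℝ) := by
      refine Finset.sum_congr rfl fun j hj => ?_
      rw [hdiv_x j (Finset.mem_range.mp hj)]
    rw [hsum_eq]
    have hterm : (min (((kx / ∏ i ∈ Finset.Ico (n + 2) (n + 2), p i) % p (n + 1) : ℕ) : ℝ)
        ((q (n + 1) : ℝ) - 1)) / ∏ i ∈ range (n + 2), (q i : ℝ) =
        1 / ∏ i ∈ range (n + 2), (q i : ℝ) := by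
      rw [hIcoself, Nat.div_one, hkx_def, Nat.mul_add_mod', Nat.mod_eq_of_lt (by omega)]
      rw [min_eq_left]
      · norm_num
      · have : (2 : ℝ) ≤ (q (n + 1) : ℝ) := by exact_mod_cast hqn1
        norm_num; linarith
    rw [hterm]
    have hQ : (0 : ℝ) < ∏ i ∈ range (n + 2), (q i : ℝ) :=
      Finset.prod_pos fun i _ => by
        have : (2 : ℝ) ≤ (q i : ℝ) := by exact_mod_cast hq i
        linarith
    have : 0 < 1 / ∏ i ∈ range (n + 2), (q i : ℝ) := by positivity
    linarith
  · -- psi y < psi x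
    have hc := psiPQ_nat_div p q hp hq kc (n + 1) (by rw [hP1_def] at hkcP; exact hkcP)
    have hy := psiPQ_nat_div p q hp hq ky (n + 1) (by rw [hP1_def] at hkyP; exact hkyP)
    have hx := psiPQ_nat_div p q hp hq kx (n + 2) (by rw [hP2_def] at hkxP; exact hkxP)
    rw [← hP1_def] at hc hy
    rw [← hP2_def] at hx
    have hyc : psiPQ p q ((ky : ℝ) / (P1 : ℕ)) = psiPQ p q ((kc : ℝ) / (P1 : ℕ)) := by
      rw [hc, hy]
      refine Finset.sum_congr rfl fun j hj => ?_
      have hj' : j < n + 1 := Finset.mem_range.mp hj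
      rcases Nat.lt_or_ge j n with hjn | hjn
      · rw [hdiv_cy j hjn]
      · have hjeq : j = n := by omega
        rw [hjeq]
        rw [hIcoself, Nat.div_one, Nat.div_one, hkc_def, hky_def,
          Nat.mul_add_mod' k0 (p n) (q n - 1), Nat.mul_add_mod' k0 (p n) (p n - 1),
          Nat.mod_eq_of_lt (by omega), Nat.mod_eq_of_lt (by omega)]
        have h1 : ((q n - 1 : ℕ) : ℝ) = (q n : ℝ) - 1 := by
          push_cast [Nat.cast_sub (by omega : 1 ≤ q n)]; ring
        have h2 : ((p n - 1 : ℕ) : ℝ) = (p n : ℝ) - 1 := by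
          push_cast [Nat.cast_sub (by omega : 1 ≤ p n)]; ring
        rw [h1, h2, min_self, min_eq_right]
        have : (q n : ℝ) ≤ (p n : ℝ) := by exact_mod_cast hqp.le
        linarith
    rw [hyc]
    -- reuse: psi c < psi x (same proof as above)
    rw [hc, hx, Finset.sum_range_succ _ (n + 1)]
    have hsum_eq : ∑ j ∈ range (n + 1),
        (min (((kx / ∏ i ∈ Finset.Ico (j + 1) (n + 2), p i) % p j : ℕ) : ℝ) ((q j : ℝ) - 1)) /
          ∏ i ∈ range (j + 1), (q i : ℝ) =
        ∑ j ∈ range (n + 1),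
        (min (((kc / ∏ i ∈ Finset.Ico (j + 1) (n + 1), p i) % p j : ℕ) : ℝ) ((q j : ℝ) - 1)) /
          ∏ i ∈ range (j + 1), (q i : ℝ) := by
      refine Finset.sum_congr rfl fun j hj => ?_
      rw [hdiv_x j (Finset.mem_range.mp hj)]
    rw [hsum_eq]
    have hterm : (min (((kx / ∏ i ∈ Finset.Ico (n + 2) (n + 2), p i) % p (n + 1) : ℕ) : ℝ)
        ((q (n + 1) : ℝ) - 1)) / ∏ i ∈ range (n + 2), (q i : ℝ) =
        1 / ∏ i ∈ range (n + 2), (q i : ℝ) := by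
      rw [hIcoself, Nat.div_one, hkx_def, Nat.mul_add_mod', Nat.mod_eq_of_lt (by omega)]
      rw [min_eq_left]
      · norm_num
      · have : (2 : ℝ) ≤ (q (n + 1) : ℝ) := by exact_mod_cast hqn1
        norm_num; linarith
    rw [hterm]
    have hQ : (0 : ℝ) < ∏ i ∈ range (n + 2), (q i : ℝ) :=
      Finset.prod_pos fun i _ => by
        have : (2 : ℝ) ≤ (q i : ℝ) := by exact_mod_cast hq i
        linarith
    have : 0 < 1 / ∏ i ∈ range (n + 2), (q i : ℝ) := by positivity
    linarith
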